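/- Let G be a graph, σ a total order, and k ≥ 2. If est_r(u, G_σ) ≤ k for every vertex u (i.e., every vertex has at most k disjoint shortest r-qualifying paths), then for every vertex u, Σ_{v ∈ reach_r(u,G_σ)} (k−1)^{r−d_v} ≤ k·(k−1)^{r−1}, where d_v is the minimum i such that v is i-reachable from u. In particular |reach_r(u, G_σ)| ≤ k·(k−1)^{r−1}. -/

import Mathlib

open SimpleGraph

variable {V : Type*}

/-- The strict order relation of a linear order. -/
def olt (σ : LinearOrder V) (a b : V) : Prop := σ.lt a b

/-- The set of vertices `r`-reachable from `u` with respect to `σ`: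
vertices `v >_σ u` joined to `u` by a path of length at most `r`
whose internal vertices all precede `u` in `σ`. -/
def reachSet (G : SimpleGraph V) (σ : LinearOrder V) (r : ℕ) (u : V) : Set V :=
  {v | olt σ u v ∧ ∃ p : G.Walk u v, p.IsPath ∧ p.length ≤ r ∧
    ∀ w ∈ p.support, w ≠ u → w ≠ v → olt σ w u}

/-- The set of vertices weakly `r`-reachable from `u` with respect to `σ`:
vertices `v >_σ u` joined to `u` by a path of length at most `r`
whose internal vertices all precede `v` in `σ`. -/
def wreachSet (G : SimpleGraph V) (σ : LinearOrder V) (r : ℕ) (u : V) : Set V :=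
  {v | olt σ u v ∧ ∃ p : G.Walk u v, p.IsPath ∧ p.length ≤ r ∧
    ∀ w ∈ p.support, w ≠ u → w ≠ v → olt σ w v}

/-- `col_r(G_σ)`: the maximum `r`-reach over all vertices. -/
noncomputable def colOrd [Fintype V] (G : SimpleGraph V) (σ : LinearOrder V) (r : ℕ) : ℕ :=
  Finset.univ.sup fun u => (reachSet G σ r u).ncard

/-- `wcol_r(G_σ)`: the maximum weak `r`-reach over all vertices. -/
noncomputable def wcolOrd [Fintype V] (G : SimpleGraph V) (σ : LinearOrder V) (r : ℕ) : ℕ :=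
  Finset.univ.sup fun u => (wreachSet G σ r u).ncard

/-- The `r`-coloring number of `G`. -/
noncomputable def colNum [Fintype V] (G : SimpleGraph V) (r : ℕ) : ℕ :=
  ⨅ σ : LinearOrder V, colOrd G σ r

/-- The weak `r`-coloring number of `G`. -/
noncomputable def wcolNum [Fintype V] (G : SimpleGraph V) (r : ℕ) : ℕ :=
  ⨅ σ : LinearOrder V, wcolOrd G σ r

/-- `p` is an `r`-qualifying path from `u` with respect to the (possibly partial)
order `lt`: a path of length at most `r` ending at a vertex `v` with `v ≠ u`,
`v` not `<` `u`, all of whose internal vertices are `< u`. -/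
def IsQual (G : SimpleGraph V) (lt : V → V → Prop) (r : ℕ) {u v : V} (p : G.Walk u v) : Prop :=
  p.IsPath ∧ p.length ≤ r ∧ v ≠ u ∧ ¬ lt v u ∧ ∀ w ∈ p.support, w ≠ u → w ≠ v → lt w u

/-- The `r`-backconnectivity of `u`: the maximum number of `r`-qualifying paths from `u`
that are pairwise vertex-disjoint apart from `u`. -/
noncomputable def bcon (G : SimpleGraph V) (lt : V → V → Prop) (r : ℕ) (u : V) : ℕ :=
  sSup {n | ∃ f : Fin n → (v : V) × G.Walk u v,
    (∀ i, IsQual G lt r (f i).2) ∧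
    ∀ i j : Fin n, i ≠ j → ∀ w, w ∈ (f i).2.support → w ∈ (f j).2.support → w = u}

/-- A shortest `r`-qualifying path: an `r`-qualifying `u`–`v` path of length `ℓ` such that
there is no `(ℓ-1)`-qualifying `u`–`v` path. -/
def IsShortQual (G : SimpleGraph V) (lt : V → V → Prop) (r : ℕ) {u v : V} (p : G.Walk u v) :
    Prop :=
  IsQual G lt r p ∧ ¬ ∃ q : G.Walk u v, IsQual G lt (p.length - 1) q

/-- The estimated `r`-backconnectivity of `u`: the maximum number of shortest
`r`-qualifying paths from `u` that are pairwise vertex-disjoint apart from `u`. -/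
noncomputable def est (G : SimpleGraph V) (lt : V → V → Prop) (r : ℕ) (u : V) : ℕ :=
  sSup {n | ∃ f : Fin n → (v : V) × G.Walk u v,
    (∀ i, IsShortQual G lt r (f i).2) ∧
    ∀ i j : Fin n, i ≠ j → ∀ w, w ∈ (f i).2.support → w ∈ (f j).2.support → w = u}

/-- The `r`-admissibility of `G`. -/
noncomputable def admNum [Fintype V] (G : SimpleGraph V) (r : ℕ) : ℕ :=
  ⨅ σ : LinearOrder V, Finset.univ.sup fun u => bcon G (olt σ) r u

/-- `d_v(u, G_σ)`: the least `i` such that `v` is `i`-reachable from `u`. -/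
noncomputable def dval (G : SimpleGraph V) (σ : LinearOrder V) (u v : V) : ℕ :=
  sInf {i | v ∈ reachSet G σ i u}

namespace SimpleGraph.Walk
variable {V : Type*} {G : SimpleGraph V} [DecidableEq V]

lemma length_takeUntil_add_dropUntil {u v w : V} (p : G.Walk v w) (h : u ∈ p.support) :
    (p.takeUntil u h).length + (p.dropUntil u h).length = p.length := by
  have := congrArg Walk.length (p.take_spec h)
  rwa [length_append] at this

lemma eq_start_of_length_takeUntil_eq_zero {u v w : V} (p : G.Walk v w) (h : u ∈ p.support)
    (h0 : (p.takeUntil u h).length = 0) : u = v :=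
  (eq_of_length_eq_zero h0).symm

lemma length_takeUntil_lt' {V : Type*} {G : SimpleGraph V} [DecidableEq V] {y z : V} :
    ∀ {v w : V} (p : G.Walk v w) (hy : y ∈ p.support) (hz : z ∈ (p.takeUntil y hy).support)
      (_ : z ≠ y) (hz' : z ∈ p.support),
      (p.takeUntil z hz').length < (p.takeUntil y hy).length := by
  intro v w p
  induction p with
  | nil =>
    intro hy hz hzy _
    have hz2 := support_takeUntil_subset _ hy hz
    simp only [support_nil, List.mem_singleton] at hz2 hy
    exact absurd (hz2.trans hy.symm) hzy
  | @cons v v₁ w r q ih =>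
    intro hy hz hzy hz'
    by_cases hvy : v = y
    · subst hvy
      have : (Walk.cons r q).takeUntil v hy = Walk.nil := by simp [Walk.takeUntil]
      rw [this] at hz
      simp only [support_nil, List.mem_singleton] at hz
      exact absurd hz hzy
    · have hy' : y ∈ q.support := by
        rcases (by simpa [support_cons] using hy : y = v ∨ y ∈ q.support) with h | h
        · exact absurd h.symm hvy
        · exact h
      have htake : (Walk.cons r q).takeUntil y hy = Walk.cons r (q.takeUntil y hy') := by
        simp [Walk.takeUntil, hvy]
      by_cases hzv : z = v
      · subst hzv
        have h0 : (Walk.cons r q).takeUntil z hz' = Walk.nil := by simp [Walk.takeUntil]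
        rw [h0, htake]
        simp
      · have hz'' : z ∈ q.support := by
          rcases (by simpa [support_cons] using hz' : z = v ∨ z ∈ q.support) with h | h
          · exact absurd h hzv
          · exact h
        have hzq : z ∈ (q.takeUntil y hy').support := by
          rw [htake] at hz
          rcases (by simpa [support_cons] using hz : z = v ∨ z ∈ (q.takeUntil y hy').support) with
            h | h
          · exact absurd h hzv
          · exact h
        have hmain := ih hy' hzq hzy hz''
        have hvz : v ≠ z := fun h => hzv h.symm
        have h1 : (Walk.cons r q).takeUntil z hz' = Walk.cons r (q.takeUntil z hz'') := by
          simp [Walk.takeUntil, hvz]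
        rw [h1, htake]
        simpa using hmain

lemma mem_takeUntil_or {V : Type*} {G : SimpleGraph V} [DecidableEq V] {y z : V} :
    ∀ {v w : V} (p : G.Walk v w) (hy : y ∈ p.support) (hz : z ∈ p.support),
      y ∈ (p.takeUntil z hz).support ∨ z ∈ (p.takeUntil y hy).support := by
  intro v w p
  induction p with
  | nil =>
    intro hy hz
    left
    simp only [support_nil, List.mem_singleton] at hy
    subst hy; exact start_mem_support _
  | @cons v v₁ w r q ih =>
    intro hy hz
    by_cases hvy : v = y
    · subst hvy; left; exact start_mem_support _
    · by_cases hvz : v = z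
      · subst hvz; right; exact start_mem_support _
      · have hy' : y ∈ q.support := by
          rcases (by simpa [support_cons] using hy : y = v ∨ y ∈ q.support) with h | h
          · exact absurd h.symm hvy
          · exact h
        have hz' : z ∈ q.support := by
          rcases (by simpa [support_cons] using hz : z = v ∨ z ∈ q.support) with h | h
          · exact absurd h.symm hvz
          · exact h
        have htz : (Walk.cons r q).takeUntil z hz = Walk.cons r (q.takeUntil z hz') := by
          simp [Walk.takeUntil, hvz]
        have hty : (Walk.cons r q).takeUntil y hy = Walk.cons r (q.takeUntil y hy') := by
          simp [Walk.takeUntil, hvy]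
        rcases ih hy' hz' with hc | hc
        · left; rw [htz]; simp [hc]
        · right; rw [hty]; simp [hc]

lemma eq_of_mem_takeUntil_mem_dropUntil {v w y z : V} {p : G.Walk v w} (hp : p.IsPath)
    (hy : y ∈ p.support) (h1 : z ∈ (p.takeUntil y hy).support)
    (h2 : z ∈ (p.dropUntil y hy).support) : z = y := by
  have hnd := hp.support_nodup
  conv at hnd => rw [← take_spec p hy]
  rw [support_append] at hnd
  have hdisj := List.disjoint_of_nodup_append hnd
  by_contra hne
  have h2' : z ∈ (p.dropUntil y hy).support.tail := by
    have hcons := support_eq_cons (p.dropUntil y hy)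
    rw [hcons] at h2
    rcases List.mem_cons.mp h2 with h | h
    · exact absurd h hne
    · exact h
  exact hdisj h1 h2'

lemma length_takeUntil_lt_of_mem_dropUntil {v w y z : V} {p : G.Walk v w} (hp : p.IsPath)
    (hy : y ∈ p.support) (h2 : z ∈ (p.dropUntil y hy).support) (hne : z ≠ y)
    (hz' : z ∈ p.support) :
    (p.takeUntil y hy).length < (p.takeUntil z hz').length := by
  rcases mem_takeUntil_or p hy hz' with h | h
  · exact length_takeUntil_lt' p hz' h (fun hyz => hne hyz.symm) hy
  · exact absurd (eq_of_mem_takeUntil_mem_dropUntil hp hy h h2) hne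

lemma takeUntil_injective_pos {v w y z : V} {p : G.Walk v w} (_ : p.IsPath)
    (hy : y ∈ p.support) (hz : z ∈ p.support)
    (hlen : (p.takeUntil y hy).length = (p.takeUntil z hz).length) : y = z := by
  by_contra hne
  rcases mem_takeUntil_or p hy hz with h | h
  · exact absurd hlen (Nat.ne_of_lt (length_takeUntil_lt' p hz h hne hy))
  · exact absurd hlen.symm (Nat.ne_of_lt (length_takeUntil_lt' p hy h (Ne.symm hne) hz))

lemma end_not_mem_takeUntil {v w y : V} {p : G.Walk v w} (hp : p.IsPath)
    (hy : y ∈ p.support) (hne : w ≠ y) : w ∉ (p.takeUntil y hy).support := fun hmem =>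
  hne (eq_of_mem_takeUntil_mem_dropUntil hp hy hmem (end_mem_support _))

lemma start_not_mem_dropUntil {v w y : V} {p : G.Walk v w} (hp : p.IsPath)
    (hy : y ∈ p.support) (hne : v ≠ y) : v ∉ (p.dropUntil y hy).support := fun hmem =>
  hne (eq_of_mem_takeUntil_mem_dropUntil hp hy (start_mem_support _) hmem)

end SimpleGraph.Walk

namespace EstAux
variable {V : Type*}

lemma sigma_lt_trans {σ : LinearOrder V} {a b c : V} (h1 : σ.lt a b) (h2 : σ.lt b c) :
    σ.lt a c := by letI := σ; exact lt_trans h1 h2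
lemma sigma_lt_asymm {σ : LinearOrder V} {a b : V} (h1 : σ.lt a b) : ¬ σ.lt b a := by
  letI := σ; exact lt_asymm h1
lemma sigma_lt_irrefl {σ : LinearOrder V} {a : V} : ¬ σ.lt a a := by
  letI := σ; exact lt_irrefl a
lemma sigma_ne_of_lt {σ : LinearOrder V} {a b : V} (h1 : σ.lt a b) : a ≠ b := by
  letI := σ; exact ne_of_lt h1
lemma sigma_lt_resolve {σ : LinearOrder V} {a b : V} (h1 : a ≠ b) (h2 : ¬ σ.lt a b) :
    σ.lt b a := by letI := σ; exact h1.lt_or_gt.resolve_left h2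

variable {G : SimpleGraph V} {σ : LinearOrder V}

/-- qualifying path predicate (no length bound) -/
def QP (G : SimpleGraph V) (σ : LinearOrder V) {x v : V} (p : G.Walk x v) : Prop :=
  p.IsPath ∧ ∀ z ∈ p.support, z ≠ x → z ≠ v → σ.lt z x

/-- minimum length of a qualifying path -/
noncomputable def minlen (G : SimpleGraph V) (σ : LinearOrder V) (x v : V) : ℕ :=
  sInf {n | ∃ p : G.Walk x v, QP G σ p ∧ p.length = n}

lemma minlen_le {x v : V} (W : G.Walk x v)
    (hW : ∀ z ∈ W.support, z ≠ x → z ≠ v → σ.lt z x) : minlen G σ x v ≤ W.length :=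
  le_trans (Nat.sInf_le ⟨W.bypass, ⟨W.bypass_isPath,
    fun z hz hz1 hz2 => hW z (W.support_bypass_subset hz) hz1 hz2⟩, rfl⟩) W.length_bypass_le

lemma minlen_spec {x v : V} (p : G.Walk x v) (hp : QP G σ p) :
    ∃ q : G.Walk x v, QP G σ q ∧ q.length = minlen G σ x v :=
  Nat.sInf_mem (⟨p.length, p, hp, rfl⟩ : {n | ∃ p : G.Walk x v, QP G σ p ∧ p.length = n}.Nonempty)

/-- a good prefix: all vertices besides the start lie strictly below the start. -/
def GoodPfx (σ : LinearOrder V) {x w' : V} (π : G.Walk x w') : Prop :=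
  ∀ z ∈ π.support, z ≠ x → σ.lt z x

/-- a "tail" : a walk continuing a good prefix, with all its vertices other than its start
and end below the root `x`, ending above `x`, such that prefix+tail has minimum length. -/
structure Tail (G : SimpleGraph V) (σ : LinearOrder V) (x w' : V) {v : V} (π : G.Walk x w')
    (S : G.Walk w' v) : Prop where
  path : S.IsPath
  ltxv : σ.lt x v
  small : ∀ z ∈ S.support, z ≠ w' → z ≠ v → σ.lt z x
  minl : π.length + S.length = minlen G σ x v

lemma GoodPfx.w_lt {x w' : V} {π : G.Walk x w'} (hπ : GoodPfx σ π) :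
    w' = x ∨ σ.lt w' x := by
  by_cases h : w' = x
  · exact Or.inl h
  · exact Or.inr (hπ _ (Walk.end_mem_support _) h)

lemma Tail.len_pos {x w' v : V} {π : G.Walk x w'} {S : G.Walk w' v}
    (hgood : GoodPfx σ π) (hS : Tail G σ x w' π S) : 1 ≤ S.length := by
  by_contra h
  have h0 : S.length = 0 := by omega
  have hwv : w' = v := Walk.eq_of_length_eq_zero h0
  rcases hgood.w_lt with h1 | h1
  · exact sigma_lt_irrefl (h1 ▸ hwv ▸ hS.ltxv)
  · exact sigma_lt_asymm h1 (hwv ▸ hS.ltxv)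

lemma Tail.lt_w'v {x w' v : V} {π : G.Walk x w'} {S : G.Walk w' v}
    (hgood : GoodPfx σ π) (hS : Tail G σ x w' π S) : σ.lt w' v := by
  rcases hgood.w_lt with h1 | h1
  · exact h1 ▸ hS.ltxv
  · exact sigma_lt_trans h1 hS.ltxv

lemma prefix_disj [DecidableEq V] {x w' v : V} {π : G.Walk x w'} {S : G.Walk w' v}
    (hgood : GoodPfx σ π) (hS : Tail G σ x w' π S) {z : V}
    (h1 : z ∈ π.support) (h2 : z ∈ S.support) : z = w' := by
  by_contra hne
  have hcond : ∀ z' ∈ ((π.takeUntil z h1).append (S.dropUntil z h2)).support,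
      z' ≠ x → z' ≠ v → σ.lt z' x := by
    intro z' hz' hz'x hz'v
    rcases (Walk.mem_support_append_iff _ _).mp hz' with h | h
    · exact hgood _ (Walk.support_takeUntil_subset _ _ h) hz'x
    · have hz'S : z' ∈ S.support := Walk.support_dropUntil_subset _ _ h
      have hz'w : z' ≠ w' := fun hzw =>
        Walk.start_not_mem_dropUntil hS.path h2 (fun hh => hne hh.symm) (hzw ▸ h)
      exact hS.small _ hz'S hz'w hz'v
  have hW := minlen_le _ hcond
  rw [Walk.length_append] at hW
  have e1 := Walk.length_takeUntil_add_dropUntil π h1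
  have e2 := Walk.length_takeUntil_add_dropUntil S h2
  have d1 : 1 ≤ (π.dropUntil z h1).length := by
    by_contra h
    exact hne (Walk.eq_of_length_eq_zero (by omega : (π.dropUntil z h1).length = 0))
  have d2 : 1 ≤ (S.takeUntil z h2).length := by
    by_contra h
    exact hne (Walk.eq_start_of_length_takeUntil_eq_zero S h2
      (by omega : (S.takeUntil z h2).length = 0))
  have := hS.minl
  omega

lemma trunc_exists [DecidableEq V] {x w' v : V} {π : G.Walk x w'} {S : G.Walk w' v}
    (hgood : GoodPfx σ π) (hS : Tail G σ x w' π S) :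
    ∃ (b : V) (T : G.Walk w' b), σ.lt w' b ∧ T.IsPath ∧
      (∀ z ∈ T.support, z ∈ S.support) ∧ 1 ≤ T.length ∧ T.length ≤ S.length ∧
      (∀ z ∈ T.support, z ≠ w' → z ≠ b → σ.lt z w') ∧
      (∀ (q : G.Walk w' b), (∀ z ∈ q.support, z ≠ w' → z ≠ b → σ.lt z w') →
        T.length ≤ q.length) := by
  have hw'v : σ.lt w' v := hS.lt_w'v hgood
  set N : Set ℕ :=
    {n | ∃ (b : V) (hb : b ∈ S.support), σ.lt w' b ∧ (S.takeUntil b hb).length = n} with hN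
  have hNne : N.Nonempty := ⟨_, v, Walk.end_mem_support S, hw'v, rfl⟩
  obtain ⟨b, hb, hw'b, hlen⟩ := Nat.sInf_mem hNne
  have hbw' : b ≠ w' := fun h => sigma_ne_of_lt hw'b h.symm
  refine ⟨b, S.takeUntil b hb, hw'b, hS.path.takeUntil hb,
    fun z hz => Walk.support_takeUntil_subset _ _ hz, ?_, Walk.length_takeUntil_le _ _, ?_, ?_⟩
  · by_contra h
    exact hbw' (Walk.eq_start_of_length_takeUntil_eq_zero S hb (by omega))
  · -- internal vertices are below w'
    intro z hz hzw' hzb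
    by_contra hnlt
    have hltz : σ.lt w' z := sigma_lt_resolve (fun h => hzw' h) hnlt
    have hz' : z ∈ S.support := Walk.support_takeUntil_subset _ _ hz
    have hmem : (S.takeUntil z hz').length ∈ N := ⟨z, hz', hltz, rfl⟩
    have := Nat.sInf_le hmem
    have hlt := Walk.length_takeUntil_lt' S hb hz hzb hz'
    omega
  · -- shortest among all "qualifying" walks from w' to b
    intro q hq
    by_contra hql
    have hcond : ∀ z' ∈ ((π.append q).append (S.dropUntil b hb)).support,
        z' ≠ x → z' ≠ v → σ.lt z' x := by
      intro z' hz' hz'x hz'v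
      rcases (Walk.mem_support_append_iff _ _).mp hz' with h | h
      · rcases (Walk.mem_support_append_iff _ _).mp h with h' | h'
        · exact hgood _ h' hz'x
        · -- in q
          by_cases hzw : z' = w'
          · exact hgood _ (hzw ▸ Walk.end_mem_support π) hz'x
          · by_cases hzb : z' = b
            · exact hS.small _ (hzb ▸ hb) (hzb ▸ hbw') hz'v
            · have := hq _ h' hzw hzb
              rcases hgood.w_lt with hc | hc
              · exact hc ▸ this
              · exact sigma_lt_trans this hc
      · have hz'S : z' ∈ S.support := Walk.support_dropUntil_subset _ _ h
        have hz'w : z' ≠ w' := fun hzw =>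
          Walk.start_not_mem_dropUntil hS.path hb (fun hh => sigma_ne_of_lt hw'b hh) (hzw ▸ h)
        exact hS.small _ hz'S hz'w hz'v
    have hW := minlen_le _ hcond
    rw [Walk.length_append, Walk.length_append] at hW
    have e2 := Walk.length_takeUntil_add_dropUntil S hb
    have := hS.minl
    omega

lemma btrunc_exists [DecidableEq V] {x w' v₀ : V} {π : G.Walk x w'} {S₀ : G.Walk w' v₀}
    (hgood : GoodPfx σ π) (hw'x : σ.lt w' x) (hS₀ : Tail G σ x w' π S₀) :
    ∃ (b : V) (B : G.Walk w' b), σ.lt w' b ∧ B.IsPath ∧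
      (∀ z ∈ B.support, z ∈ π.support) ∧ 1 ≤ B.length ∧ B.length ≤ π.length ∧
      (∀ z ∈ B.support, z ≠ w' → z ≠ b → σ.lt z w') ∧
      (∀ (q : G.Walk w' b), (∀ z ∈ q.support, z ≠ w' → z ≠ b → σ.lt z w') →
        B.length ≤ q.length) := by
  set ρ : G.Walk w' x := π.reverse with hρ
  have hρsup : ∀ z, z ∈ ρ.support ↔ z ∈ π.support := by
    intro z; rw [hρ, Walk.support_reverse, List.mem_reverse]
  set N : Set ℕ :=
    {n | ∃ (b : V) (hb : b ∈ ρ.support), σ.lt w' b ∧ (ρ.takeUntil b hb).length = n} with hN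
  have hNne : N.Nonempty := ⟨_, x, Walk.end_mem_support ρ, hw'x, rfl⟩
  obtain ⟨b, hb, hw'b, hlen⟩ := Nat.sInf_mem hNne
  have hbw' : b ≠ w' := fun h => sigma_ne_of_lt hw'b h.symm
  set B : G.Walk w' b := (ρ.takeUntil b hb).bypass with hB
  have hBsub : ∀ z, z ∈ B.support → z ∈ (ρ.takeUntil b hb).support :=
    fun z hz => Walk.support_bypass_subset _ hz
  have hBlen : B.length ≤ (ρ.takeUntil b hb).length := Walk.length_bypass_le _
  have hρlen : ρ.length = π.length := Walk.length_reverse _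
  refine ⟨b, B, hw'b, Walk.bypass_isPath _,
    fun z hz => (hρsup z).mp (Walk.support_takeUntil_subset _ _ (hBsub z hz)), ?_, ?_, ?_, ?_⟩
  · by_contra h
    exact hbw' ((Walk.eq_of_length_eq_zero (by omega : B.length = 0)).symm)
  · have := Walk.length_takeUntil_le ρ hb
    omega
  · intro z hz hzw' hzb
    by_contra hnlt
    have hltz : σ.lt w' z := sigma_lt_resolve (fun h => hzw' h) hnlt
    have hzt : z ∈ (ρ.takeUntil b hb).support := hBsub z hz
    have hz' : z ∈ ρ.support := Walk.support_takeUntil_subset _ _ hzt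
    have hmem : (ρ.takeUntil z hz').length ∈ N := ⟨z, hz', hltz, rfl⟩
    have := Nat.sInf_le hmem
    have hlt := Walk.length_takeUntil_lt' ρ hb hzt hzb hz'
    omega
  · intro q hq
    by_contra hql
    have hcond : ∀ z' ∈ (((ρ.dropUntil b hb).reverse.append q.reverse).append S₀).support,
        z' ≠ x → z' ≠ v₀ → σ.lt z' x := by
      intro z' hz' hz'x hz'v
      rcases (Walk.mem_support_append_iff _ _).mp hz' with h | h
      · rcases (Walk.mem_support_append_iff _ _).mp h with h' | h'
        · rw [Walk.support_reverse, List.mem_reverse] at h'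
          exact hgood _ ((hρsup z').mp (Walk.support_dropUntil_subset _ _ h')) hz'x
        · rw [Walk.support_reverse, List.mem_reverse] at h'
          by_cases hzw : z' = w'
          · exact hzw ▸ hw'x
          · by_cases hzb : z' = b
            · exact hgood _ ((hρsup z').mp (hzb ▸ hb)) hz'x
            · exact sigma_lt_trans (hq _ h' hzw hzb) hw'x
      · by_cases hzw : z' = w'
        · exact hzw ▸ hw'x
        · exact hS₀.small _ h hzw hz'v
    have hW := minlen_le _ hcond
    rw [Walk.length_append, Walk.length_append, Walk.length_reverse, Walk.length_reverse] at hW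
    have e2 := Walk.length_takeUntil_add_dropUntil ρ hb
    have := hS₀.minl
    omega

end EstAux

namespace EstAux
open SimpleGraph Walk
variable {V : Type*}

lemma est_bddAbove [Fintype V] (G : SimpleGraph V) (lt : V → V → Prop) (r : ℕ) (u : V) :
    BddAbove {n | ∃ f : Fin n → (v : V) × G.Walk u v,
      (∀ i, IsShortQual G lt r (f i).2) ∧
      ∀ i j : Fin n, i ≠ j → ∀ w, w ∈ (f i).2.support → w ∈ (f j).2.support → w = u} := by
  refine ⟨Fintype.card V, fun n hn => ?_⟩
  obtain ⟨f, hf, hdis⟩ := hn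
  have hinj : Function.Injective (fun i => (f i).1) := by
    intro i j hij
    by_contra hne
    have h1 : (f i).1 ∈ (f i).2.support := Walk.end_mem_support _
    have h2 : (f i).1 ∈ (f j).2.support := by
      have : (f j).1 ∈ (f j).2.support := Walk.end_mem_support _
      simpa [← hij] using this
    exact (hf i).1.2.2.1 (hdis i j hne _ h1 h2)
  simpa using Fintype.card_le_of_injective _ hinj

lemma length_le_est [Fintype V] {G : SimpleGraph V} {lt : V → V → Prop} {r : ℕ} {u : V}
    (L : List ((v : V) × G.Walk u v)) (h1 : ∀ p ∈ L, IsShortQual G lt r p.2)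
    (h2 : L.Pairwise (fun p q => ∀ w, w ∈ p.2.support → w ∈ q.2.support → w = u)) :
    L.length ≤ est G lt r u := by
  apply le_csSup (est_bddAbove G lt r u)
  refine ⟨fun i => L.get i, fun i => h1 _ (by simpa using List.get_mem L i.1 i.2), ?_⟩
  intro i j hij z hzi hzj
  rcases lt_or_gt_of_ne (fun h : (i : ℕ) = (j : ℕ) => hij (Fin.ext h)) with h | h
  · exact List.pairwise_iff_get.mp h2 i j h z hzi hzj
  · exact List.pairwise_iff_get.mp h2 j i h z hzj hzi

variable {G : SimpleGraph V} {σ : LinearOrder V}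

lemma shortqual_of_trunc {r : ℕ} {w' b : V} {T : G.Walk w' b} (hpath : T.IsPath)
    (hlt : σ.lt w' b) (hlenr : T.length ≤ r) (h1 : 1 ≤ T.length)
    (hint : ∀ z ∈ T.support, z ≠ w' → z ≠ b → σ.lt z w')
    (hmin : ∀ (q : G.Walk w' b), (∀ z ∈ q.support, z ≠ w' → z ≠ b → σ.lt z w') →
      T.length ≤ q.length) :
    IsShortQual G (olt σ) r T := by
  constructor
  · exact ⟨hpath, hlenr, fun h => sigma_ne_of_lt hlt h.symm,
      fun h => sigma_lt_asymm hlt h, hint⟩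
  · rintro ⟨q, hqpath, hqlen, -, -, hqint⟩
    have := hmin q hqint
    omega

lemma cap_bound [Fintype V] [DecidableEq V] {r k : ℕ}
    (hest : ∀ z, est G (olt σ) r z ≤ k)
    {x w' vj : V} {π : G.Walk x w'} (hgood : GoodPfx σ π) (hw'x : σ.lt w' x)
    (hπr : π.length ≤ r)
    {Sj : G.Walk w' vj} (hSj : Tail G σ x w' π Sj) (hSjr : Sj.length ≤ r)
    (Y : Set V) (hY : ∀ z ∈ Sj.support, z ≠ w' → z ∈ Y)
    {n : ℕ} (f : Fin n → (v : V) × G.Walk w' v)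
    (hf : ∀ i, Tail G σ x w' π (f i).2 ∧ (f i).2.length ≤ r ∧
          ∀ z ∈ (f i).2.support, z ≠ w' → z ∉ Y)
    (hdis : ∀ i j, i ≠ j → ∀ z, z ∈ (f i).2.support → z ∈ (f j).2.support → z = w') :
    n ≤ k - 2 := by
  choose b T hb hTpath hTsub hT1 hTle hTint hTmin using fun i => trunc_exists hgood (hf i).1
  obtain ⟨bB, B, hbB, hBpath, hBsub, hB1, hBle, hBint, hBmin⟩ := btrunc_exists hgood hw'x hSj
  obtain ⟨bF, F, hbF, hFpath, hFsub, hF1, hFle, hFint, hFmin⟩ := trunc_exists hgood hSj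
  set L : List ((v : V) × G.Walk w' v) :=
    ⟨bB, B⟩ :: ⟨bF, F⟩ :: List.ofFn (fun i => (⟨b i, T i⟩ : (v : V) × G.Walk w' v)) with hL
  have hmem : ∀ p ∈ L, IsShortQual G (olt σ) r p.2 := by
    intro p hp
    rw [hL] at hp
    rcases List.mem_cons.mp hp with rfl | hp
    · exact shortqual_of_trunc hBpath hbB (le_trans hBle hπr) hB1 hBint hBmin
    · rcases List.mem_cons.mp hp with rfl | hp
      · exact shortqual_of_trunc hFpath hbF (le_trans hFle hSjr) hF1 hFint hFmin
      · obtain ⟨i, rfl⟩ := List.mem_ofFn.mp hp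
        exact shortqual_of_trunc (hTpath i) (hb i) (le_trans (hTle i) (hf i).2.1) (hT1 i)
          (hTint i) (hTmin i)
  have hBT : ∀ i : Fin n, ∀ z, z ∈ B.support → z ∈ (T i).support → z = w' := by
    intro i z hz1 hz2
    exact prefix_disj hgood (hf i).1 (hBsub z hz1) (hTsub i z hz2)
  have hBF : ∀ z, z ∈ B.support → z ∈ F.support → z = w' := by
    intro z hz1 hz2
    exact prefix_disj hgood hSj (hBsub z hz1) (hFsub z hz2)
  have hFT : ∀ i : Fin n, ∀ z, z ∈ F.support → z ∈ (T i).support → z = w' := by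
    intro i z hz1 hz2
    by_contra hne
    exact (hf i).2.2 z ((hTsub i) z hz2) hne (hY z (hFsub z hz1) hne)
  have hTT : ∀ i j : Fin n, i ≠ j → ∀ z, z ∈ (T i).support → z ∈ (T j).support → z = w' := by
    intro i j hij z hz1 hz2
    exact hdis i j hij z ((hTsub i) z hz1) ((hTsub j) z hz2)
  have hpw : L.Pairwise (fun p q => ∀ w, w ∈ p.2.support → w ∈ q.2.support → w = w') := by
    rw [hL]
    refine List.Pairwise.cons ?_ (List.Pairwise.cons ?_ ?_)
    · intro q hq z hz1 hz2
      rcases List.mem_cons.mp hq with rfl | hq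
      · exact hBF z hz1 hz2
      · obtain ⟨i, rfl⟩ := List.mem_ofFn.mp hq
        exact hBT i z hz1 hz2
    · intro q hq z hz1 hz2
      obtain ⟨i, rfl⟩ := List.mem_ofFn.mp hq
      exact hFT i z hz1 hz2
    · rw [List.pairwise_ofFn]
      intro i j hij z hz1 hz2
      exact hTT i j (ne_of_lt hij) z hz1 hz2
  have hlen : L.length = n + 2 := by simp [hL]
  have := length_le_est L hmem hpw
  have hk' := hest w'
  omega

lemma arith_step {k : ℕ} (hk : 2 ≤ k) : ∀ (pj : ℕ) (t' : ℕ), 1 ≤ pj → pj ≤ t' →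
    (k-1)^(t'-pj) + ∑ i ∈ Finset.Ico 1 pj, (k-2)*(k-1)^(t'-1-i) ≤ (k-1)^(t'-1) := by
  intro pj
  induction pj with
  | zero => intro t' h1 h2; omega
  | succ n IH =>
    intro t' h1 h2
    rcases Nat.eq_zero_or_pos n with rfl | hn
    · simp
    · rw [Finset.sum_Ico_succ_top (by omega : 1 ≤ n)]
      have he : t' - n = (t' - 1 - n) + 1 := by omega
      have hh : (k-1)^(t'-n) + ∑ i ∈ Finset.Ico 1 n, (k-2)*(k-1)^(t'-1-i) ≤ (k-1)^(t'-1) :=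
        IH t' (by omega) (by omega)
      have he2 : t' - (n+1) = t' - 1 - n := by omega
      rw [he2]
      have hexp : (k-1)^(t'-n) = (k-1)^(t'-1-n) + (k-2)*(k-1)^(t'-1-n) := by
        rw [he, pow_succ]
        have : k - 1 = 1 + (k-2) := by omega
        rw [this]
        ring
      omega

lemma bundle [Fintype V] [DecidableEq V] {G : SimpleGraph V} {σ : LinearOrder V} {r k : ℕ}
    (hk : 2 ≤ k) (hest : ∀ z, est G (olt σ) r z ≤ k) :
    ∀ (t' : ℕ) (x w : V) (π : G.Walk x w) (X : Set V) (c' : ℕ) (T : Finset V),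
      GoodPfx σ π → π.length + t' ≤ r →
      (∀ (n : ℕ) (f : Fin n → (v : V) × G.Walk w v),
          (∀ i, Tail G σ x w π (f i).2 ∧ (f i).2.length ≤ t' ∧
            (∀ z ∈ (f i).2.support, z ≠ w → z ∉ X)) →
          (∀ i j, i ≠ j → ∀ z, z ∈ (f i).2.support → z ∈ (f j).2.support → z = w) →
          n ≤ c') →
      (∀ v ∈ T, ∃ S : G.Walk w v, Tail G σ x w π S ∧ S.length ≤ t' ∧
          (∀ z ∈ S.support, z ≠ w → z ∉ X)) →
      (∑ v ∈ T, (k-1) ^ (t' - (minlen G σ x v - π.length))) ≤ c' * (k-1) ^ (t' - 1) := by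
  intro t'
  induction t' using Nat.strong_induction_on with
  | _ t' IH =>
  intro x w π X c' T hgood hπt hcap hT
  classical
  set A : Set ℕ := {n | ∃ f : Fin n → (v : V) × G.Walk w v,
      (∀ i, Tail G σ x w π (f i).2 ∧ (f i).2.length ≤ t' ∧
        (∀ z ∈ (f i).2.support, z ≠ w → z ∉ X)) ∧
      (∀ i j, i ≠ j → ∀ z, z ∈ (f i).2.support → z ∈ (f j).2.support → z = w)} with hA
  have h0A : (0 : ℕ) ∈ A := ⟨Fin.elim0, fun i => i.elim0, fun i => i.elim0⟩
  have hAbdd : BddAbove A := ⟨c', by rintro n ⟨f, h1, h2⟩; exact hcap n f h1 h2⟩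
  set m := sSup A with hm
  have hmemA : m ∈ A := Nat.sSup_mem ⟨0, h0A⟩ hAbdd
  obtain ⟨f, hfSuf, hfdis⟩ := hmemA
  have hmax : ∀ n ∈ A, n ≤ m := fun n hn => le_csSup hAbdd hn
  have hmc' : m ≤ c' := hcap m f hfSuf hfdis
  choose S hStail hSlen hSavoid using hT
  -- the assignment of each v ∈ T to a member of the family and a split vertex
  have hassign : ∀ (a : {v // v ∈ T}), ∃ p : Fin m × V,
      ((f p.1).1 = a.1 ∧ p.2 = w) ∨
      (p.2 ≠ w ∧ σ.lt p.2 x ∧ p.2 ≠ (f p.1).1 ∧ p.2 ≠ a.1 ∧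
        ∃ (hzv : p.2 ∈ (S a.1 a.2).support) (hzj : p.2 ∈ (f p.1).2.support),
          ((S a.1 a.2).takeUntil p.2 hzv).length = ((f p.1).2.takeUntil p.2 hzj).length ∧
          (∀ y ∈ ((S a.1 a.2).dropUntil p.2 hzv).support, y ≠ p.2 →
            ∀ j' : Fin m, y ∉ (f j').2.support)) := by
    rintro ⟨v, hv⟩
    by_cases hP1 : ∃ j : Fin m, (f j).1 = v
    · obtain ⟨j, hj⟩ := hP1
      exact ⟨(j, w), Or.inl ⟨hj, rfl⟩⟩
    push_neg at hP1
    have hvw : v ≠ w := fun h => sigma_lt_irrefl (h ▸ ((hStail v hv).lt_w'v hgood))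
    have hMne : ∃ z, z ≠ w ∧ z ∈ (S v hv).support ∧ ∃ j : Fin m, z ∈ (f j).2.support := by
      by_contra hM
      push_neg at hM
      have hnew : ∀ j : Fin m, ∀ z, z ∈ (S v hv).support → z ∈ (f j).2.support → z = w := by
        intro j z h1 h2
        by_contra hzw
        exact hM z hzw h1 j h2
      have hmem : m + 1 ∈ A := by
        refine ⟨Fin.snoc f ⟨v, S v hv⟩, ?_, ?_⟩
        · intro i
          induction i using Fin.lastCases with
          | last =>
            rw [Fin.snoc_last]
            exact ⟨hStail v hv, hSlen v hv, hSavoid v hv⟩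
          | cast i' =>
            rw [Fin.snoc_castSucc]
            exact hfSuf i'
        · intro i j hij z hzi hzj
          rcases Fin.eq_castSucc_or_eq_last i with ⟨i', rfl⟩ | rfl <;>
            rcases Fin.eq_castSucc_or_eq_last j with ⟨j', rfl⟩ | rfl
          · rw [Fin.snoc_castSucc] at hzi
            rw [Fin.snoc_castSucc] at hzj
            exact hfdis i' j' (fun h => hij (by rw [h])) z hzi hzj
          · rw [Fin.snoc_castSucc] at hzi
            rw [Fin.snoc_last] at hzj
            exact hnew i' z hzj hzi
          · rw [Fin.snoc_last] at hzi
            rw [Fin.snoc_castSucc] at hzj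
            exact hnew j' z hzi hzj
          · exact absurd rfl hij
      have := hmax _ hmem
      omega
    obtain ⟨z₀, hz₀w, hz₀v, j₀, hz₀j⟩ := hMne
    set NN : Set ℕ := {nn | ∃ (z : V) (hzv : z ∈ (S v hv).support), z ≠ w ∧
        (∃ j : Fin m, z ∈ (f j).2.support) ∧ ((S v hv).takeUntil z hzv).length = nn} with hNN
    have hNNne : NN.Nonempty := ⟨_, z₀, hz₀v, hz₀w, ⟨j₀, hz₀j⟩, rfl⟩
    have hNNbdd : BddAbove NN := ⟨(S v hv).length, by
      rintro nn ⟨z, hzv, -, -, rfl⟩; exact Walk.length_takeUntil_le _ _⟩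
    obtain ⟨z, hzv, hzw, ⟨j, hzj⟩, hzlen⟩ := Nat.sSup_mem hNNne hNNbdd
    have hclean : ∀ y ∈ ((S v hv).dropUntil z hzv).support, y ≠ z →
        ∀ j' : Fin m, y ∉ (f j').2.support := by
      intro y hy hyz j' hyj'
      have hyS : y ∈ (S v hv).support := Walk.support_dropUntil_subset _ _ hy
      have hyw : y ≠ w := by
        intro h
        exact Walk.start_not_mem_dropUntil (hStail v hv).path hzv
          (fun hh => hzw hh.symm) (h ▸ hy)
      have hmemNN : ((S v hv).takeUntil y hyS).length ∈ NN := ⟨y, hyS, hyw, ⟨j', hyj'⟩, rfl⟩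
      have hle := le_csSup hNNbdd hmemNN
      have hlt := Walk.length_takeUntil_lt_of_mem_dropUntil (hStail v hv).path hzv hy hyz hyS
      omega
    have hzv' : z ≠ v := by
      intro h
      subst h
      have hvmem : z ∈ (f j).2.support := hzj
      have := (hfSuf j).1.small z hvmem hzw (fun hh => hP1 j hh.symm)
      exact sigma_lt_asymm this (hStail z hv).ltxv
    have hzx : σ.lt z x := (hStail v hv).small z hzv hzw hzv'
    have hzj1 : z ≠ (f j).1 := by
      intro h
      exact sigma_lt_asymm (h ▸ hzx) (h ▸ (hfSuf j).1.ltxv)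
    have e1 := Walk.length_takeUntil_add_dropUntil (S v hv) hzv
    have e2 := Walk.length_takeUntil_add_dropUntil (f j).2 hzj
    have hW1 : minlen G σ x v ≤
        π.length + (((f j).2.takeUntil z hzj).length + ((S v hv).dropUntil z hzv).length) := by
      have hcond : ∀ y ∈ ((π.append ((f j).2.takeUntil z hzj)).append
          ((S v hv).dropUntil z hzv)).support, y ≠ x → y ≠ v → σ.lt y x := by
        intro y hy hyx hyv
        rcases (Walk.mem_support_append_iff _ _).mp hy with h | h
        · rcases (Walk.mem_support_append_iff _ _).mp h with h' | h'
          · exact hgood _ h' hyx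
          · by_cases hyw : y = w
            · exact hgood _ (hyw ▸ Walk.end_mem_support π) hyx
            · have hy' : y ∈ (f j).2.support := Walk.support_takeUntil_subset _ _ h'
              have hyend : y ≠ (f j).1 := by
                intro h
                exact Walk.end_not_mem_takeUntil (hfSuf j).1.path hzj
                  (fun hh => hzj1 hh.symm) (h ▸ h')
              exact (hfSuf j).1.small y hy' hyw hyend
        · have hy' : y ∈ (S v hv).support := Walk.support_dropUntil_subset _ _ h
          have hyw : y ≠ w := by
            intro hh
            exact Walk.start_not_mem_dropUntil (hStail v hv).path hzv
              (fun h2 => hzw h2.symm) (hh ▸ h)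
          exact (hStail v hv).small y hy' hyw hyv
      have := minlen_le _ hcond
      rwa [Walk.length_append, Walk.length_append, add_assoc] at this
    have hW2 : minlen G σ x (f j).1 ≤
        π.length + (((S v hv).takeUntil z hzv).length + ((f j).2.dropUntil z hzj).length) := by
      have hcond : ∀ y ∈ ((π.append ((S v hv).takeUntil z hzv)).append
          ((f j).2.dropUntil z hzj)).support, y ≠ x → y ≠ (f j).1 → σ.lt y x := by
        intro y hy hyx hyend
        rcases (Walk.mem_support_append_iff _ _).mp hy with h | h
        · rcases (Walk.mem_support_append_iff _ _).mp h with h' | h'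
          · exact hgood _ h' hyx
          · by_cases hyw : y = w
            · exact hgood _ (hyw ▸ Walk.end_mem_support π) hyx
            · have hy' : y ∈ (S v hv).support := Walk.support_takeUntil_subset _ _ h'
              have hyv : y ≠ v := by
                intro h
                exact Walk.end_not_mem_takeUntil (hStail v hv).path hzv
                  (fun hh => hzv' hh.symm) (h ▸ h')
              exact (hStail v hv).small y hy' hyw hyv
        · have hy' : y ∈ (f j).2.support := Walk.support_dropUntil_subset _ _ h
          have hyw : y ≠ w := by
            intro hh
            exact Walk.start_not_mem_dropUntil (hfSuf j).1.path hzj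
              (fun h2 => hzw h2.symm) (hh ▸ h)
          exact (hfSuf j).1.small y hy' hyw hyend
      have := minlen_le _ hcond
      rwa [Walk.length_append, Walk.length_append, add_assoc] at this
    have hpos : ((S v hv).takeUntil z hzv).length = ((f j).2.takeUntil z hzj).length := by
      have m1 := (hStail v hv).minl
      have m2 := (hfSuf j).1.minl
      omega
    exact ⟨(j, z), Or.inr ⟨hzw, hzx, fun h => hzj1 h, fun h => hzv' h, hzv, hzj, hpos, hclean⟩⟩
  choose g hg using hassign
  set wt : V → ℕ := fun v => (k-1) ^ (t' - (minlen G σ x v - π.length)) with hwt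
  have hmapsto : ∀ a ∈ T.attach, g a ∈ (Finset.univ : Finset (Fin m)) ×ˢ (Finset.univ : Finset V) := by
    intro a _; simp
  have hsplit : ∑ v ∈ T, wt v = ∑ p ∈ (Finset.univ : Finset (Fin m)) ×ˢ (Finset.univ : Finset V),
      ∑ a ∈ T.attach.filter (fun a => g a = p), wt a.1 := by
    rw [Finset.sum_fiberwise_of_maps_to hmapsto]
    exact (Finset.sum_attach T wt).symm
  rw [hsplit, Finset.sum_product]
  have hperj : ∀ j : Fin m, (∑ z ∈ (Finset.univ : Finset V),
      ∑ a ∈ T.attach.filter (fun a => g a = (j, z)), wt a.1) ≤ (k-1)^(t'-1) := by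
    intro j
    set pj := (f j).2.length with hpj
    have hpj1 : 1 ≤ pj := Tail.len_pos hgood (hfSuf j).1
    have hpjt : pj ≤ t' := (hfSuf j).2.1
    rw [← Finset.sum_erase_add _ _ (Finset.mem_univ w)]
    have hFw : ∑ a ∈ T.attach.filter (fun a => g a = (j, w)), wt a.1 ≤ (k-1)^(t'-pj) := by
      rcases Finset.eq_empty_or_nonempty (T.attach.filter (fun a => g a = (j, w))) with he | hne
      · rw [he, Finset.sum_empty]
        exact Nat.zero_le _
      · obtain ⟨a₀, ha₀⟩ := hne
        have hga₀ : g a₀ = (j, w) := (Finset.mem_filter.mp ha₀).2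
        have hsub : T.attach.filter (fun a => g a = (j, w)) ⊆ {a₀} := by
          intro a ha
          have hga : g a = (j, w) := (Finset.mem_filter.mp ha).2
          have hP : ∀ b : {v // v ∈ T}, g b = (j, w) → b.1 = (f j).1 := by
            intro b hb
            rcases hg b with h | h
            · rw [hb] at h
              exact h.1.symm
            · rw [hb] at h
              exact absurd rfl h.1
          have : a.1 = a₀.1 := by rw [hP a hga, hP a₀ hga₀]
          simp [Subtype.ext this]
        refine le_trans (Finset.sum_le_sum_of_subset hsub) ?_
        rw [Finset.sum_singleton]
        have ha1 : a₀.1 = (f j).1 := by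
          rcases hg a₀ with h | h
          · rw [hga₀] at h
            exact h.1.symm
          · rw [hga₀] at h
            exact absurd rfl h.1
        have hminj := (hfSuf j).1.minl
        rw [hwt]
        simp only [ha1]
        have : minlen G σ x (f j).1 - π.length = pj := by omega
        rw [this]
    have hFz : (∑ z ∈ Finset.univ.erase w,
        ∑ a ∈ T.attach.filter (fun a => g a = (j, z)), wt a.1) ≤
        ∑ i ∈ Finset.Ico 1 pj, (k-2)*(k-1)^(t'-1-i) := by
      have hdat : ∀ (z : V) (a : {v // v ∈ T}), g a = (j, z) → z ≠ w →
          σ.lt z x ∧ z ≠ (f j).1 ∧ z ≠ a.1 ∧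
          ∃ (hzv : z ∈ (S a.1 a.2).support) (hzj : z ∈ (f j).2.support),
            ((S a.1 a.2).takeUntil z hzv).length = ((f j).2.takeUntil z hzj).length ∧
            (∀ y ∈ ((S a.1 a.2).dropUntil z hzv).support, y ≠ z →
              ∀ j' : Fin m, y ∉ (f j').2.support) := by
        intro z a ha hzw
        rcases hg a with h | h
        · rw [ha] at h
          exact absurd h.2 hzw
        · rw [ha] at h
          exact ⟨h.2.1, h.2.2.1, h.2.2.2.1, h.2.2.2.2⟩
      have hkey : ∀ z, z ≠ w → (T.attach.filter (fun a => g a = (j, z))).Nonempty →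
          ∃ (hzj : z ∈ (f j).2.support),
            1 ≤ ((f j).2.takeUntil z hzj).length ∧
            ((f j).2.takeUntil z hzj).length ≤ pj - 1 ∧
            (∑ a ∈ T.attach.filter (fun a => g a = (j, z)), wt a.1) ≤
              (k-2)*(k-1)^(t'-1-((f j).2.takeUntil z hzj).length) := by
        intro z hzw hne
        obtain ⟨a₀, ha₀⟩ := hne
        have hga₀ : g a₀ = (j, z) := (Finset.mem_filter.mp ha₀).2
        obtain ⟨hzx, hzj1, -, hzv₀, hzj, hpos₀, -⟩ := hdat z a₀ hga₀ hzw
        have e2 := Walk.length_takeUntil_add_dropUntil (f j).2 hzj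
        have hd1 : 1 ≤ ((f j).2.dropUntil z hzj).length := by
          by_contra h
          have hd0 : ((f j).2.dropUntil z hzj).length = 0 := by omega
          exact hzj1 (Walk.eq_of_length_eq_zero hd0)
        have hi'1 : 1 ≤ ((f j).2.takeUntil z hzj).length := by
          by_contra h
          exact hzw (Walk.eq_start_of_length_takeUntil_eq_zero _ hzj (by omega))
        set i' := ((f j).2.takeUntil z hzj).length with hi'
        have hi'pj : i' ≤ pj - 1 := by omega
        refine ⟨hzj, hi'1, hi'pj, ?_⟩
        set π' : G.Walk x z := π.append ((f j).2.takeUntil z hzj) with hπ'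
        have hπ'len : π'.length = π.length + i' := by rw [hπ', Walk.length_append]
        have hπ'good : GoodPfx σ π' := by
          intro y hy hyx
          rcases (Walk.mem_support_append_iff _ _).mp hy with h | h
          · exact hgood _ h hyx
          · by_cases hyw : y = w
            · exact hgood _ (hyw ▸ Walk.end_mem_support π) hyx
            · have hy' : y ∈ (f j).2.support := Walk.support_takeUntil_subset _ _ h
              have hyend : y ≠ (f j).1 := fun hh =>
                Walk.end_not_mem_takeUntil (hfSuf j).1.path hzj (fun h2 => hzj1 h2.symm) (hh ▸ h)
              exact (hfSuf j).1.small y hy' hyw hyend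
        set X' : Set V := X ∪ {y | y ≠ z ∧ ∃ j' : Fin m, y ∈ (f j').2.support} with hX'
        set t'' := t' - i' with ht''
        have htlt : t'' < t' := by omega
        have hSjtail : Tail G σ x z π' ((f j).2.dropUntil z hzj) := by
          refine ⟨(hfSuf j).1.path.dropUntil hzj, (hfSuf j).1.ltxv, ?_, ?_⟩
          · intro y hy hyz hyend
            have hy' : y ∈ (f j).2.support := Walk.support_dropUntil_subset _ _ hy
            have hyw : y ≠ w := fun hh =>
              Walk.start_not_mem_dropUntil (hfSuf j).1.path hzj (fun h2 => hzw h2.symm) (hh ▸ hy)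
            exact (hfSuf j).1.small y hy' hyw hyend
          · have := (hfSuf j).1.minl
            rw [hπ'len]
            omega
        have hcap'' : ∀ (n : ℕ) (f' : Fin n → (v : V) × G.Walk z v),
            (∀ i, Tail G σ x z π' (f' i).2 ∧ (f' i).2.length ≤ t'' ∧
              (∀ y ∈ (f' i).2.support, y ≠ z → y ∉ X')) →
            (∀ i i2, i ≠ i2 → ∀ y, y ∈ (f' i).2.support → y ∈ (f' i2).2.support → y = z) →
            n ≤ k - 2 := by
          intro n f' hf' hdis'
          refine cap_bound hest hπ'good hzx ?_ hSjtail ?_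
            {y | y ≠ z ∧ ∃ j' : Fin m, y ∈ (f j').2.support} ?_ f' ?_ hdis'
          · rw [hπ'len]; omega
          · have := Walk.length_dropUntil_le (f j).2 hzj
            omega
          · intro y hy hyz
            exact ⟨hyz, j, Walk.support_dropUntil_subset _ _ hy⟩
          · intro i
            refine ⟨(hf' i).1, ?_, ?_⟩
            · have := (hf' i).2.1; omega
            · intro y hy hyz hyY
              exact (hf' i).2.2 y hy hyz (Or.inr hyY)
        set T'' : Finset V := (T.attach.filter (fun a => g a = (j, z))).image
          (fun a => a.1) with hT''
        have hT''mem : ∀ v ∈ T'', ∃ S' : G.Walk z v, Tail G σ x z π' S' ∧ S'.length ≤ t'' ∧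
            (∀ y ∈ S'.support, y ≠ z → y ∉ X') := by
          intro v hv'
          obtain ⟨a, ha, rfl⟩ := Finset.mem_image.mp hv'
          have hga : g a = (j, z) := (Finset.mem_filter.mp ha).2
          obtain ⟨-, -, -, hzv, hzjA, hposA, hcleanA⟩ := hdat z a hga hzw
          have hposA' : ((S a.1 a.2).takeUntil z hzv).length = i' := hposA
          have e1 := Walk.length_takeUntil_add_dropUntil (S a.1 a.2) hzv
          refine ⟨(S a.1 a.2).dropUntil z hzv, ⟨(hStail a.1 a.2).path.dropUntil hzv,
            (hStail a.1 a.2).ltxv, ?_, ?_⟩, ?_, ?_⟩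
          · intro y hy hyz hyend
            have hy' : y ∈ (S a.1 a.2).support := Walk.support_dropUntil_subset _ _ hy
            have hyw : y ≠ w := fun hh => Walk.start_not_mem_dropUntil (hStail a.1 a.2).path
              hzv (fun h2 => hzw h2.symm) (hh ▸ hy)
            exact (hStail a.1 a.2).small y hy' hyw hyend
          · have := (hStail a.1 a.2).minl
            rw [hπ'len]
            omega
          · have := hSlen a.1 a.2
            omega
          · intro y hy hyz
            intro hmem
            rcases hmem with hyX | hyY
            · exact hSavoid a.1 a.2 y (Walk.support_dropUntil_subset _ _ hy)
                (fun hh => Walk.start_not_mem_dropUntil (hStail a.1 a.2).path hzv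
                  (fun h2 => hzw h2.symm) (hh ▸ hy)) hyX
            · obtain ⟨-, j', hyj'⟩ := hyY
              exact hcleanA y hy hyz j' hyj'
        have hrec := IH t'' htlt x z π' X' (k-2) T'' hπ'good (by rw [hπ'len]; omega)
          hcap'' hT''mem
        have hsum_eq : (∑ a ∈ T.attach.filter (fun a => g a = (j, z)), wt a.1) =
            ∑ v ∈ T'', (k-1) ^ (t'' - (minlen G σ x v - π'.length)) := by
          rw [hT'', Finset.sum_image (by intro a _ b _ h; exact Subtype.ext h)]
          refine Finset.sum_congr rfl ?_
          intro a ha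
          have hga : g a = (j, z) := (Finset.mem_filter.mp ha).2
          obtain ⟨-, -, -, hzv, hzjA, hposA, -⟩ := hdat z a hga hzw
          have hposA' : ((S a.1 a.2).takeUntil z hzv).length = i' := hposA
          have e1 := Walk.length_takeUntil_add_dropUntil (S a.1 a.2) hzv
          have hminA := (hStail a.1 a.2).minl
          have hlenA := hSlen a.1 a.2
          simp only [hwt]
          rw [hπ'len]
          congr 1
          omega
        rw [hsum_eq]
        refine le_trans hrec (le_of_eq ?_)
        have he : t'' - 1 = t' - 1 - i' := by omega
        rw [he]
      set Z : Finset V := (Finset.univ.erase w).filter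
        (fun z => (T.attach.filter (fun a => g a = (j, z))).Nonempty) with hZ
      have hzero : ∀ z ∈ Finset.univ.erase w, z ∉ Z →
          (∑ a ∈ T.attach.filter (fun a => g a = (j, z)), wt a.1) = 0 := by
        intro z hz hzZ
        have hne : ¬ (T.attach.filter (fun a => g a = (j, z))).Nonempty := by
          intro h; exact hzZ (Finset.mem_filter.mpr ⟨hz, h⟩)
        rw [Finset.not_nonempty_iff_eq_empty.mp hne, Finset.sum_empty]
      rw [← Finset.sum_subset (Finset.filter_subset _ _) (fun z hz hzZ => hzero z hz hzZ)]
      set posZ : V → ℕ := fun z => if h : z ∈ (f j).2.support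
        then ((f j).2.takeUntil z h).length else 0 with hposZ
      have hstep : ∀ z ∈ Z, ((∑ a ∈ T.attach.filter (fun a => g a = (j, z)), wt a.1) ≤
          (k-2)*(k-1)^(t'-1- posZ z)) ∧ 1 ≤ posZ z ∧ posZ z ≤ pj - 1 ∧
          z ∈ (f j).2.support := by
        intro z hz
        have hzw : z ≠ w := (Finset.mem_erase.mp (Finset.mem_filter.mp hz).1).1
        obtain ⟨hzj, h1, h2, h3⟩ := hkey z hzw (Finset.mem_filter.mp hz).2
        have hpz : posZ z = ((f j).2.takeUntil z hzj).length := by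
          simp only [hposZ]
          rw [dif_pos hzj]
        exact ⟨by rw [hpz]; exact h3, by rw [hpz]; exact h1, by rw [hpz]; exact h2, hzj⟩
      calc ∑ z ∈ Z, (∑ a ∈ T.attach.filter (fun a => g a = (j, z)), wt a.1)
          ≤ ∑ z ∈ Z, (k-2)*(k-1)^(t'-1- posZ z) :=
            Finset.sum_le_sum (fun z hz => (hstep z hz).1)
        _ = ∑ i ∈ Z.image posZ, (k-2)*(k-1)^(t'-1-i) := by
            rw [Finset.sum_image ?_]
            intro z1 h1 z2 h2 heq
            have m1 := (hstep z1 h1).2.2.2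
            have m2 := (hstep z2 h2).2.2.2
            have e1 : posZ z1 = ((f j).2.takeUntil z1 m1).length := by
              simp only [hposZ]; rw [dif_pos m1]
            have e2 : posZ z2 = ((f j).2.takeUntil z2 m2).length := by
              simp only [hposZ]; rw [dif_pos m2]
            exact Walk.takeUntil_injective_pos (hfSuf j).1.path m1 m2 (by rw [← e1, ← e2, heq])
        _ ≤ ∑ i ∈ Finset.Ico 1 pj, (k-2)*(k-1)^(t'-1-i) := by
            refine Finset.sum_le_sum_of_subset ?_
            intro i hi
            obtain ⟨z, hz, rfl⟩ := Finset.mem_image.mp hi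
            refine Finset.mem_Ico.mpr ⟨(hstep z hz).2.1, ?_⟩
            have := (hstep z hz).2.2.1
            omega
    have harith := arith_step hk pj t' hpj1 hpjt
    omega
  calc ∑ j : Fin m, ∑ z ∈ (Finset.univ : Finset V),
      ∑ a ∈ T.attach.filter (fun a => g a = (j, z)), wt a.1
      ≤ ∑ _j : Fin m, (k-1)^(t'-1) := Finset.sum_le_sum (fun j _ => hperj j)
    _ = m * (k-1)^(t'-1) := by simp [Finset.sum_const, mul_comm]
    _ ≤ c' * (k-1)^(t'-1) := Nat.mul_le_mul_right _ hmc'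

end EstAux

theorem est_bound_implies_reach_bound [Fintype V] (G : SimpleGraph V)
    (σ : LinearOrder V) (r k : ℕ) (hk : 2 ≤ k)
    (hest : ∀ u, est G (olt σ) r u ≤ k) :
    ∀ u, (∑ᶠ v ∈ reachSet G σ r u, (k - 1) ^ (r - dval G σ u v)) ≤ k * (k - 1) ^ (r - 1) ∧
      (reachSet G σ r u).ncard ≤ k * (k - 1) ^ (r - 1) := by
  classical
  intro u
  have hfin : (reachSet G σ r u).Finite := Set.toFinite _
  set Tf : Finset V := hfin.toFinset with hTf
  -- dval = minlen on the reach set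
  have hdval : ∀ v ∈ reachSet G σ r u, dval G σ u v = EstAux.minlen G σ u v ∧
      EstAux.minlen G σ u v ≤ r := by
    intro v hv
    obtain ⟨hlt, p, hp1, hp2, hp3⟩ := hv
    have hqp : EstAux.QP G σ p := ⟨hp1, hp3⟩
    have hmr : EstAux.minlen G σ u v ≤ r :=
      le_trans (Nat.sInf_le ⟨p, hqp, rfl⟩) hp2
    refine ⟨le_antisymm ?_ ?_, hmr⟩
    · obtain ⟨q, hq, hqlen⟩ := EstAux.minlen_spec p hqp
      exact Nat.sInf_le ⟨hlt, q, hq.1, le_of_eq hqlen, hq.2⟩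
    · have hd : dval G σ u v ∈ {i | v ∈ reachSet G σ i u} :=
        Nat.sInf_mem ⟨r, ⟨hlt, p, hp1, hp2, hp3⟩⟩
      obtain ⟨-, q, hq1, hq2, hq3⟩ := hd
      exact le_trans (Nat.sInf_le ⟨q, ⟨hq1, hq3⟩, rfl⟩) hq2
  have hbundle := EstAux.bundle hk hest r u u (Walk.nil) ∅ k Tf ?_ ?_ ?_ ?_
  · have hsum : (∑ᶠ v ∈ reachSet G σ r u, (k - 1) ^ (r - dval G σ u v)) =
        ∑ v ∈ Tf, (k - 1) ^ (r - dval G σ u v) := by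
      rw [← Set.Finite.coe_toFinset hfin, finsum_mem_coe_finset]
    have hsum2 : (∑ v ∈ Tf, (k - 1) ^ (r - dval G σ u v)) =
        ∑ v ∈ Tf, (k-1) ^ (r - (EstAux.minlen G σ u v - (Walk.nil : G.Walk u u).length)) := by
      refine Finset.sum_congr rfl ?_
      intro v hv
      have hv' : v ∈ reachSet G σ r u := (Set.Finite.mem_toFinset hfin).mp hv
      rw [(hdval v hv').1]
      simp
    constructor
    · rw [hsum, hsum2]
      exact hbundle
    · have hcard : (reachSet G σ r u).ncard = Tf.card := by
        rw [hTf]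
        exact Set.ncard_eq_toFinset_card _ hfin
      rw [hcard]
      calc Tf.card = ∑ _v ∈ Tf, 1 := by simp
        _ ≤ ∑ v ∈ Tf, (k-1) ^ (r - (EstAux.minlen G σ u v - (Walk.nil : G.Walk u u).length)) :=
            Finset.sum_le_sum (fun v _ => Nat.one_le_pow _ _ (by omega))
        _ ≤ k * (k - 1) ^ (r - 1) := hbundle
  · -- GoodPfx nil
    intro z hz hzu
    simp only [Walk.support_nil, List.mem_singleton] at hz
    exact absurd hz hzu
  · simp
  · -- capacity at the top: est u ≤ k
    intro n f hf hdis
    have hsq : ∀ i, IsShortQual G (olt σ) r (f i).2 := by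
      intro i
      obtain ⟨htail, hlen, -⟩ := hf i
      constructor
      · exact ⟨htail.path, hlen, (EstAux.sigma_ne_of_lt htail.ltxv).symm,
          EstAux.sigma_lt_asymm htail.ltxv, htail.small⟩
      · rintro ⟨q, hq⟩
        have hml := EstAux.minlen_le q hq.2.2.2.2
        have hmin := htail.minl
        have hpos : 1 ≤ (f i).2.length := htail.len_pos (by
          intro z hz hzu
          simp only [Walk.support_nil, List.mem_singleton] at hz
          exact absurd hz hzu)
        have hql := hq.2.1
        simp only [Walk.length_nil] at hmin
        omega
    refine le_trans (le_csSup (EstAux.est_bddAbove G (olt σ) r u) ⟨f, hsq, hdis⟩) (hest u)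
  · -- every reachable vertex has a minimal qualifying path
    intro v hv
    have hv' : v ∈ reachSet G σ r u := (Set.Finite.mem_toFinset hfin).mp hv
    obtain ⟨hlt, p, hp1, hp2, hp3⟩ := hv'
    obtain ⟨q, hq, hqlen⟩ := EstAux.minlen_spec p ⟨hp1, hp3⟩
    refine ⟨q, ⟨hq.1, hlt, hq.2, by simp [hqlen]⟩, ?_, by simp⟩
    rw [hqlen]
    exact (hdval v ((Set.Finite.mem_toFinset hfin).mp hv)).2
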